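/- Let W, D, T be random variables on a common probability space taking values in finite sets, with p(W=w)>0 for all w in the range of W, and suppose D and T are conditionally independent given W. Let d, t be values with p(D=d)>0, p(T=t)>0 and p(D=d,T=t)>0, and suppose p(W=w | D=d) > 0 and p(W=w | T=t) > 0 whenever p(W=w | D=d, T=t) > 0. Then log( p(D=d, T=t) / (p(D=d)·p(T=t)) ) = KL( p(W=· | D=d, T=t) ‖ p(W=·) ) − KL( p(W=· | D=d, T=t) ‖ p(W=· | D=d) ) − KL( p(W=· | D=d, T=t) ‖ p(W=· | T=t) ). -/
import Mathlib


open Finset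
open scoped Classical

/-- Probability of an event under a pmf on a finite sample space. -/
noncomputable def pr {Ω : Type*} [Fintype Ω] (p : Ω → ℝ) (E : Ω → Prop) : ℝ :=
  ∑ ω, if E ω then p ω else 0

/-- Conditional probability `p(E | F)`. -/
noncomputable def cpr {Ω : Type*} [Fintype Ω] (p : Ω → ℝ) (E F : Ω → Prop) : ℝ :=
  pr p (fun ω => E ω ∧ F ω) / pr p F

/-- `X` and `Y` are conditionally independent given `Z`. -/
def CondIndepRV {Ω A B C : Type*} [Fintype Ω] (p : Ω → ℝ)
    (X : Ω → A) (Y : Ω → B) (Z : Ω → C) : Prop :=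
  ∀ x y z, 0 < pr p (fun ω => Z ω = z) →
    cpr p (fun ω => X ω = x ∧ Y ω = y) (fun ω => Z ω = z) =
      cpr p (fun ω => X ω = x) (fun ω => Z ω = z) *
      cpr p (fun ω => Y ω = y) (fun ω => Z ω = z)

/-- KL divergence between two pmfs on a finite set. -/
noncomputable def klD {A : Type*} [Fintype A] (q r : A → ℝ) : ℝ :=
  ∑ w, if 0 < q w then q w * Real.log (q w / r w) else 0

lemma pr_nonneg {Ω : Type*} [Fintype Ω] (p : Ω → ℝ) (hp : ∀ ω, 0 ≤ p ω) (E : Ω → Prop) :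
    0 ≤ pr p E := by
  apply Finset.sum_nonneg; intro ω _
  split
  · exact hp ω
  · exact le_refl 0

lemma pr_congr {Ω : Type*} [Fintype Ω] (p : Ω → ℝ) {E F : Ω → Prop} (h : ∀ ω, E ω ↔ F ω) :
    pr p E = pr p F := by
  unfold pr; apply Finset.sum_congr rfl; intro ω _; simp [h ω]

lemma pr_partition {Ω W : Type*} [Fintype Ω] [Fintype W] (p : Ω → ℝ) (Wv : Ω → W)
    (E : Ω → Prop) : ∑ w, pr p (fun ω => Wv ω = w ∧ E ω) = pr p E := by
  unfold pr
  rw [Finset.sum_comm]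
  apply Finset.sum_congr rfl; intro ω _
  by_cases hE : E ω <;> simp [hE, Finset.sum_ite_eq]

theorem stmt9 {Ω W D T : Type*} [Fintype Ω] [Fintype W] [Fintype D] [Fintype T]
    (p : Ω → ℝ) (hp : ∀ ω, 0 ≤ p ω) (hps : ∑ ω, p ω = 1)
    (Wv : Ω → W) (Dv : Ω → D) (Tv : Ω → T)
    (hW : ∀ w, 0 < pr p (fun ω => Wv ω = w))
    (hCI : CondIndepRV p Dv Tv Wv)
    (d : D) (t : T)
    (hd : 0 < pr p (fun ω => Dv ω = d))
    (ht : 0 < pr p (fun ω => Tv ω = t))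
    (hdt : 0 < pr p (fun ω => Dv ω = d ∧ Tv ω = t))
    (hposd : ∀ w, 0 < cpr p (fun ω => Wv ω = w) (fun ω => Dv ω = d ∧ Tv ω = t) →
      0 < cpr p (fun ω => Wv ω = w) (fun ω => Dv ω = d))
    (hpost : ∀ w, 0 < cpr p (fun ω => Wv ω = w) (fun ω => Dv ω = d ∧ Tv ω = t) →
      0 < cpr p (fun ω => Wv ω = w) (fun ω => Tv ω = t)) :
    Real.log (pr p (fun ω => Dv ω = d ∧ Tv ω = t) /
        (pr p (fun ω => Dv ω = d) * pr p (fun ω => Tv ω = t))) =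
      klD (fun w => cpr p (fun ω => Wv ω = w) (fun ω => Dv ω = d ∧ Tv ω = t))
          (fun w => pr p (fun ω => Wv ω = w)) -
        klD (fun w => cpr p (fun ω => Wv ω = w) (fun ω => Dv ω = d ∧ Tv ω = t))
          (fun w => cpr p (fun ω => Wv ω = w) (fun ω => Dv ω = d)) -
        klD (fun w => cpr p (fun ω => Wv ω = w) (fun ω => Dv ω = d ∧ Tv ω = t))
          (fun w => cpr p (fun ω => Wv ω = w) (fun ω => Tv ω = t)) := by
  classical
  set q : W → ℝ := fun w => cpr p (fun ω => Wv ω = w) (fun ω => Dv ω = d ∧ Tv ω = t) with hqdef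
  set c : ℝ := Real.log (pr p (fun ω => Dv ω = d ∧ Tv ω = t) /
      (pr p (fun ω => Dv ω = d) * pr p (fun ω => Tv ω = t))) with hcdef
  have hqnn : ∀ w, 0 ≤ q w := fun w =>
    div_nonneg (pr_nonneg p hp _) (pr_nonneg p hp _)
  have hqsum : ∑ w, q w = 1 := by
    have := pr_partition p Wv (fun ω => Dv ω = d ∧ Tv ω = t)
    simp only [hqdef, cpr, ← Finset.sum_div, this]
    exact div_self (ne_of_gt hdt)
  -- combine the three KL sums
  rw [klD, klD, klD, ← Finset.sum_sub_distrib, ← Finset.sum_sub_distrib]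
  have key : ∀ w, ((if 0 < q w then q w * Real.log (q w / pr p (fun ω => Wv ω = w)) else 0) -
        (if 0 < q w then q w * Real.log (q w / cpr p (fun ω => Wv ω = w) (fun ω => Dv ω = d)) else 0)) -
        (if 0 < q w then q w * Real.log (q w / cpr p (fun ω => Wv ω = w) (fun ω => Tv ω = t)) else 0) =
      if 0 < q w then q w * c else 0 := by
    intro w
    by_cases hq : 0 < q w
    · simp only [if_pos hq]
      have hA := hW w
      have hB := hposd w hq
      have hC := hpost w hq
      -- numerators
      have hE' : 0 < pr p (fun ω => Wv ω = w ∧ (Dv ω = d ∧ Tv ω = t)) := by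
        have : q w * pr p (fun ω => Dv ω = d ∧ Tv ω = t) =
            pr p (fun ω => Wv ω = w ∧ (Dv ω = d ∧ Tv ω = t)) := by
          simp [hqdef, cpr, div_mul_cancel₀, ne_of_gt hdt]
        rw [← this]; exact mul_pos hq hdt
      have hB' : 0 < pr p (fun ω => Wv ω = w ∧ Dv ω = d) := by
        have : cpr p (fun ω => Wv ω = w) (fun ω => Dv ω = d) * pr p (fun ω => Dv ω = d) =
            pr p (fun ω => Wv ω = w ∧ Dv ω = d) := by
          simp [cpr, div_mul_cancel₀, ne_of_gt hd]
        rw [← this]; exact mul_pos hB hd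
      have hC' : 0 < pr p (fun ω => Wv ω = w ∧ Tv ω = t) := by
        have : cpr p (fun ω => Wv ω = w) (fun ω => Tv ω = t) * pr p (fun ω => Tv ω = t) =
            pr p (fun ω => Wv ω = w ∧ Tv ω = t) := by
          simp [cpr, div_mul_cancel₀, ne_of_gt ht]
        rw [← this]; exact mul_pos hC ht
      -- conditional independence in product form
      have hCIw := hCI d t w hA
      have hprod : pr p (fun ω => Wv ω = w ∧ Dv ω = d) * pr p (fun ω => Wv ω = w ∧ Tv ω = t) =
          pr p (fun ω => Wv ω = w) * pr p (fun ω => Wv ω = w ∧ (Dv ω = d ∧ Tv ω = t)) := by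
        have e1 : pr p (fun ω => (Dv ω = d ∧ Tv ω = t) ∧ Wv ω = w) =
            pr p (fun ω => Wv ω = w ∧ (Dv ω = d ∧ Tv ω = t)) := pr_congr p (fun ω => and_comm)
        have e2 : pr p (fun ω => Dv ω = d ∧ Wv ω = w) =
            pr p (fun ω => Wv ω = w ∧ Dv ω = d) := pr_congr p (fun ω => and_comm)
        have e3 : pr p (fun ω => Tv ω = t ∧ Wv ω = w) =
            pr p (fun ω => Wv ω = w ∧ Tv ω = t) := pr_congr p (fun ω => and_comm)
        rw [cpr, cpr, cpr, e1, e2, e3, div_mul_div_comm, div_eq_div_iff (ne_of_gt hA)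
          (ne_of_gt (mul_pos hA hA))] at hCIw
        apply mul_right_cancel₀ (ne_of_gt hA)
        ring_nf at hCIw ⊢
        linarith [hCIw]
      -- now the log computation
      rw [← mul_sub, ← mul_sub]
      congr 1
      have hqne := ne_of_gt hq
      have lq : q w = pr p (fun ω => Wv ω = w ∧ (Dv ω = d ∧ Tv ω = t)) /
          pr p (fun ω => Dv ω = d ∧ Tv ω = t) := rfl
      have lB : cpr p (fun ω => Wv ω = w) (fun ω => Dv ω = d) =
          pr p (fun ω => Wv ω = w ∧ Dv ω = d) / pr p (fun ω => Dv ω = d) := rfl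
      have lC : cpr p (fun ω => Wv ω = w) (fun ω => Tv ω = t) =
          pr p (fun ω => Wv ω = w ∧ Tv ω = t) / pr p (fun ω => Tv ω = t) := rfl
      have eq_q : Real.log (q w) = Real.log (pr p (fun ω => Wv ω = w ∧ (Dv ω = d ∧ Tv ω = t))) -
          Real.log (pr p (fun ω => Dv ω = d ∧ Tv ω = t)) := by
        rw [lq, Real.log_div (ne_of_gt hE') (ne_of_gt hdt)]
      have eq_B : Real.log (cpr p (fun ω => Wv ω = w) (fun ω => Dv ω = d)) =
          Real.log (pr p (fun ω => Wv ω = w ∧ Dv ω = d)) -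
          Real.log (pr p (fun ω => Dv ω = d)) := by
        rw [lB, Real.log_div (ne_of_gt hB') (ne_of_gt hd)]
      have eq_C : Real.log (cpr p (fun ω => Wv ω = w) (fun ω => Tv ω = t)) =
          Real.log (pr p (fun ω => Wv ω = w ∧ Tv ω = t)) -
          Real.log (pr p (fun ω => Tv ω = t)) := by
        rw [lC, Real.log_div (ne_of_gt hC') (ne_of_gt ht)]
      rw [Real.log_div hqne (ne_of_gt hA),
          Real.log_div hqne (ne_of_gt hB),
          Real.log_div hqne (ne_of_gt hC),
          hcdef, Real.log_div (ne_of_gt hdt) (ne_of_gt (mul_pos hd ht)),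
          Real.log_mul (ne_of_gt hd) (ne_of_gt ht)]
      have hlog : Real.log (pr p (fun ω => Wv ω = w ∧ Dv ω = d)) +
          Real.log (pr p (fun ω => Wv ω = w ∧ Tv ω = t)) =
          Real.log (pr p (fun ω => Wv ω = w)) +
          Real.log (pr p (fun ω => Wv ω = w ∧ (Dv ω = d ∧ Tv ω = t))) := by
        rw [← Real.log_mul (ne_of_gt hB') (ne_of_gt hC'),
            ← Real.log_mul (ne_of_gt hA) (ne_of_gt hE'), hprod]
      linarith [hlog]
    · simp [hq]
  calc Real.log (pr p (fun ω => Dv ω = d ∧ Tv ω = t) /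
        (pr p (fun ω => Dv ω = d) * pr p (fun ω => Tv ω = t)))
      = c := rfl
    _ = (∑ w, if 0 < q w then q w else 0) * c := by
        have : (∑ w, if 0 < q w then q w else 0) = ∑ w, q w := by
          apply Finset.sum_congr rfl; intro w _
          by_cases h : 0 < q w
          · simp [h]
          · simp [h, le_antisymm (not_lt.mp h) (hqnn w)]
        rw [this, hqsum, one_mul]
    _ = ∑ w, (if 0 < q w then q w * c else 0) := by
        rw [Finset.sum_mul]; apply Finset.sum_congr rfl; intro w _
        by_cases h : 0 < q w <;> simp [h]
    _ = _ := by
        apply Finset.sum_congr rfl; intro w _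
        exact (key w).symm
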